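/- Work with the model (𝒦,r) = (𝒦_s,r_s) for s sufficiently large. Fix A ⊆ ℤ² and a stable direction u ∈ 𝒮, and let s_u = max{⟨k,u⟩ : k ∈ 𝒦}. For x ∈ ℝ² and l ≥ 0, consider the rectangles R = x + (H̄_u ∩ H̄_{u+π/2} ∩ H̄_{u+π}(l) ∩ H̄_{u−π/2}(2s)), R₊ = x + (H̄_u(s_u) ∩ H̄_{u+π/2} ∩ ℍ_{u+π} ∩ H̄_{u−π/2}(2s)) and R₋ = x + (ℍ_u(−l) ∩ H̄_{u+π/2} ∩ H̄_{u+π}(l+s_u) ∩ H̄_{u−π/2}(2s)). If [A] ∩ R₋ = [A] ∩ R₊ = A ∩ R = ∅, then [A] ∩ R = ∅. -/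

import Mathlib

open Set MeasureTheory Filter
open scoped RealInnerProductSpace Pointwise ENNReal

noncomputable section

/-- The Euclidean plane. -/
abbrev E : Type := EuclideanSpace ℝ (Fin 2)

/-- The point of the plane with coordinates `(a, b)`. -/
def pt (a b : ℝ) : E := (WithLp.equiv 2 (Fin 2 → ℝ)).symm ![a, b]

/-- The integer lattice `ℤ²` viewed inside the plane. -/
def latt : Set E := {x : E | ∃ a b : ℤ, x = pt a b}

/-- One step of threshold bootstrap percolation on `ℤ²` with neighbourhood `𝒦` and threshold `r`. -/
def step (𝒦 : Set E) (r : ℕ) (A : Set E) : Set E :=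
  A ∪ {x : E | x ∈ latt ∧ r ≤ (((fun k => x + k) '' 𝒦) ∩ A).ncard}

/-- The bootstrap percolation closure `[A]` (of the lattice points of `A`). -/
def bpCl (𝒦 : Set E) (r : ℕ) (A : Set E) : Set E :=
  ⋃ t : ℕ, (step 𝒦 r)^[t] (A ∩ latt)

/-- One step of the bootstrap percolation dynamics restricted to the region `B`. -/
def stepIn (𝒦 : Set E) (r : ℕ) (B A : Set E) : Set E :=
  A ∪ {x : E | x ∈ B ∩ latt ∧ r ≤ (((fun k => x + k) '' 𝒦) ∩ A).ncard}

/-- The closure `[A]_B` of `A` under the dynamics restricted to `B`. -/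
def bpClIn (𝒦 : Set E) (r : ℕ) (B A : Set E) : Set E :=
  ⋃ t : ℕ, (stepIn 𝒦 r B)^[t] (A ∩ latt)

/-- Rotation of the plane by `π/2` around the origin. -/
def rot (x : E) : E := pt (-(x 1)) (x 0)

/-- A "nice" set `K`: convex, invariant under rotation by `π/2` about the origin,
with `max {‖k‖ : k ∈ K} = 1`. -/
structure NiceK (K : Set E) : Prop where
  convex : Convex ℝ K
  rotInv : ∀ x ∈ K, rot x ∈ K
  normMax : IsGreatest ((fun k : E => ‖k‖) '' K) 1

/-- The neighbourhood `𝒦_s = (sK) ∩ ℤ²`. -/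
def Ks (K : Set E) (s : ℝ) : Set E := (s • K) ∩ latt

/-- The threshold `r_s = 1 + min_{u ≠ 0} |{x ∈ 𝒦_s : ⟨x,u⟩ < 0}|`. -/
def rKs (K : Set E) (s : ℝ) : ℕ :=
  1 + sInf ((fun u : E => {x : E | x ∈ Ks K s ∧ (inner ℝ x u : ℝ) < 0}.ncard) '' {u : E | u ≠ 0})

/-- The neighbourhood `𝒦_□` of the two-neighbour model. -/
def Ksq : Set E := {pt 0 0, pt 1 0, pt (-1) 0, pt 0 1, pt 0 (-1)}

/-- The neighbourhood `𝒦_△` of the three-neighbour model on the triangular lattice. -/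
def Ktri : Set E := Ksq ∪ {pt 1 (-1), pt (-1) 1}

/-- The set `𝒮` of stable directions of the model `(𝒦, r)`. -/
def stableDirs (𝒦 : Set E) (r : ℕ) : Set E :=
  {u : E | ‖u‖ = 1 ∧ {x : E | x ∈ 𝒦 ∧ (inner ℝ x u : ℝ) < 0}.ncard < r}

/-- The box `Λ_t = [-t,t]² ∩ ℤ²`. -/
def lam (t : ℝ) : Set E := {x ∈ latt | |x 0| ≤ t ∧ |x 1| ≤ t}

/-- A set `V` is `κ`-connected if any two of its points are joined by a finite
sequence of points of `V` with consecutive points at distance at most `κ`. -/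
def ConnectedWithin (κ : ℝ) (V : Set E) : Prop :=
  ∀ x ∈ V, ∀ y ∈ V, ∃ (k : ℕ) (f : ℕ → E), f 0 = x ∧ f k = y ∧
    (∀ i ≤ k, f i ∈ V) ∧ ∀ i < k, dist (f i) (f (i + 1)) ≤ κ

/-- `A` contains a `κ`-connected set of `14` sites. -/
def HasConn14 (κ : ℝ) (A : Set E) : Prop :=
  ∃ V ⊆ A, ConnectedWithin κ V ∧ V.ncard = 14

/-- Projection of a set of lattice points of the plane to the torus `(ℤ/nℤ)²`. -/
def torSet (n : ℕ) (S : Set E) : Set (ZMod n × ZMod n) :=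
  {p | ∃ a b : ℤ, pt a b ∈ S ∧ p = ((a : ZMod n), (b : ZMod n))}

/-- One step of bootstrap percolation on the torus `(ℤ/nℤ)²`. -/
def stepT (n : ℕ) (𝒦 : Set E) (r : ℕ) (A : Set (ZMod n × ZMod n)) : Set (ZMod n × ZMod n) :=
  A ∪ {x | r ≤ (((fun k => x + k) '' torSet n 𝒦) ∩ A).ncard}

/-- The bootstrap percolation closure on the torus `(ℤ/nℤ)²`. -/
def bpClT (n : ℕ) (𝒦 : Set E) (r : ℕ) (A : Set (ZMod n × ZMod n)) : Set (ZMod n × ZMod n) :=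
  ⋃ t : ℕ, (stepT n 𝒦 r)^[t] A

/-- The set `A(t)` of the first `t` sites of the torus in the order given by `σ`. -/
def Aset (n : ℕ) (σ : (ZMod n × ZMod n) ≃ Fin (n ^ 2)) (t : ℕ) : Set (ZMod n × ZMod n) :=
  {x | (σ x : ℕ) + 1 ≤ t}

/-- The percolation time `τ`. -/
def percTime (n : ℕ) (𝒦 : Set E) (r : ℕ) (σ : (ZMod n × ZMod n) ≃ Fin (n ^ 2)) : ℕ :=
  sInf {t : ℕ | bpClT n 𝒦 r (Aset n σ t) = univ}

/-- The probability (over a uniformly random bijection `σ : 𝕋 → {1,…,n²}`) that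
`|[A(τ-1)]| ≥ τ (1 + C / log n)`. -/
def probBad (𝒦 : Set E) (r : ℕ) (C : ℝ) (n : ℕ) : ℝ :=
  ({σ : (ZMod n × ZMod n) ≃ Fin (n ^ 2) |
      (percTime n 𝒦 r σ : ℝ) * (1 + C / Real.log n) ≤
        ((bpClT n 𝒦 r (Aset n σ (percTime n 𝒦 r σ - 1))).ncard : ℝ)}.ncard : ℝ) /
    (Nat.card ((ZMod n × ZMod n) ≃ Fin (n ^ 2)) : ℝ)

/-- The rectangle with corner `x`, side of length `len` in direction `rot u`
(perpendicular to `u`) and side of length `wid` in direction `u`. -/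
def rectDir (x u : E) (len wid : ℝ) : Set E :=
  {y : E | ∃ a b : ℝ, a ∈ Icc (0 : ℝ) len ∧ b ∈ Icc (0 : ℝ) wid ∧ y = x + a • rot u + b • u}

/-- The axis-parallel square `[a, a+c] × [b, b+c]`. -/
def axSquare (a b c : ℝ) : Set E := {x : E | x 0 ∈ Icc a (a + c) ∧ x 1 ∈ Icc b (b + c)}

/-- Droplets for the family `S` of stable directions: `D = ℤ² ∩ ⋂_{u ∈ S} {⟨·,u⟩ ≤ l_u}`. -/
def IsDropletS (S : Set E) (D : Set E) : Prop :=
  ∃ l : E → ℝ, D = latt ∩ ⋂ u ∈ S, {x : E | (inner ℝ x u : ℝ) ≤ l u}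

/-- The stable directions `𝒮_□` of the two-neighbour model. -/
def Ssq : Set E := {pt 1 0, pt (-1) 0, pt 0 1, pt 0 (-1)}

/-- The stable directions `𝒮_△` of the triangular three-neighbour model. -/
def Stri : Set E :=
  Ssq ∪ {pt ((Real.sqrt 2)⁻¹) ((Real.sqrt 2)⁻¹), pt (-(Real.sqrt 2)⁻¹) (-(Real.sqrt 2)⁻¹)}

/-- A valid choice of infection sets `𝒦_v ⊆ A_t ∩ (𝒦 + v)` of size `r`, one for each
newly infected vertex `v`. -/
def IsInfChoice (𝒦 : Set E) (r : ℕ) (A : Set E) (κ : E → Set E) : Prop :=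
  ∀ t : ℕ, ∀ v ∈ (step 𝒦 r)^[t + 1] (A ∩ latt) \ (step 𝒦 r)^[t] (A ∩ latt),
    κ v ⊆ (step 𝒦 r)^[t] (A ∩ latt) ∩ ((fun k => v + k) '' 𝒦) ∧ (κ v).ncard = r

/-- The out-degree of `u` in the infection graph determined by the choice `κ`. -/
def outDeg (𝒦 : Set E) (r : ℕ) (A : Set E) (κ : E → Set E) (u : E) : ℕ :=
  {v : E | (∃ t : ℕ, v ∈ (step 𝒦 r)^[t + 1] (A ∩ latt) \ (step 𝒦 r)^[t] (A ∩ latt)) ∧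
    u ∈ κ v}.ncard

/-- A vertex of `[A]` is good if its out-degree in the infection graph is at least `0.9 r`. -/
def IsGood (𝒦 : Set E) (r : ℕ) (A : Set E) (κ : E → Set E) (u : E) : Prop :=
  u ∈ bpCl 𝒦 r A ∧ (0.9 : ℝ) * r ≤ (outDeg 𝒦 r A κ u : ℝ)

/-- A fat convex set: bounded, convex, and all vertical and horizontal chords have
length at least `c`. -/
def IsFat (c : ℝ) (P : Set E) : Prop :=
  Convex ℝ P ∧ Bornology.IsBounded P ∧
  (∀ a : ℝ, (P ∩ {p : E | p 0 = a}).Nonempty → c ≤ Metric.diam (P ∩ {p : E | p 0 = a})) ∧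
  (∀ b : ℝ, (P ∩ {p : E | p 1 = b}).Nonempty → c ≤ Metric.diam (P ∩ {p : E | p 1 = b}))

def xmin (P : Set E) : ℝ := sInf ((fun p : E => p 0) '' P)
def xmax (P : Set E) : ℝ := sSup ((fun p : E => p 0) '' P)
def ymin (P : Set E) : ℝ := sInf ((fun p : E => p 1) '' P)
def ymax (P : Set E) : ℝ := sSup ((fun p : E => p 1) '' P)

/-- A convex set is horizontal if its horizontal extent is at least its vertical extent. -/
def IsHorizontal (P : Set E) : Prop := ymax P - ymin P ≤ xmax P - xmin P

/-- The upper boundary function of `P`. -/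
def upperF (P : Set E) (a : ℝ) : ℝ := sSup {y : ℝ | pt a y ∈ P}

/-- The lower boundary function of `P`. -/
def lowerF (P : Set E) (a : ℝ) : ℝ := sInf {y : ℝ | pt a y ∈ P}

/-- Slopes of tangent (supporting) lines to the upper boundary of `P` at abscissa `a`. -/
def upperSlopes (P : Set E) (a : ℝ) : Set ℝ :=
  {m : ℝ | ∀ t : ℝ, {y : ℝ | pt t y ∈ P}.Nonempty → upperF P t ≤ upperF P a + m * (t - a)}

/-- Slopes of tangent (supporting) lines to the lower boundary of `P` at abscissa `a`. -/
def lowerSlopes (P : Set E) (a : ℝ) : Set ℝ :=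
  {m : ℝ | ∀ t : ℝ, {y : ℝ | pt t y ∈ P}.Nonempty → lowerF P a + m * (t - a) ≤ lowerF P t}

/-- The vertical chord `P_{1,a}` is admissible: the tangent angles at the chord are in
`[-4π/9, 4π/9]` and the tangent slopes barely change at horizontal distance `C₄ s`. -/
def IsAdmissible (C₃ C₄ s : ℝ) (P : Set E) (a : ℝ) : Prop :=
  xmin P + C₄ * s < a ∧ a < xmax P - C₄ * s ∧ (∃ y : ℝ, pt a y ∈ P) ∧
  (∀ m ∈ upperSlopes P a, |Real.arctan m| ≤ 4 * Real.pi / 9) ∧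
  (∀ m ∈ lowerSlopes P a, |Real.arctan m| ≤ 4 * Real.pi / 9) ∧
  (∀ m₁ ∈ upperSlopes P (a - C₄ * s), ∀ m₂ ∈ upperSlopes P (a + C₄ * s),
    Real.arctan m₁ - Real.arctan m₂ ≤ 1 / C₃) ∧
  (∀ m₁ ∈ lowerSlopes P (a - C₄ * s), ∀ m₂ ∈ lowerSlopes P (a + C₄ * s),
    Real.arctan m₂ - Real.arctan m₁ ≤ 1 / C₃)

/-- The set `𝒬` of quasi-stable directions. -/
def quasiStable (s : ℝ) : Set E :=
  {u : E | ‖u‖ = 1 ∧ ∃ a b : ℤ, |(a : ℝ)| ≤ s ∧ |(b : ℝ)| ≤ s ∧ pt a b ≠ 0 ∧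
    ∃ c : ℝ, pt a b = c • u}

/-- The (possibly improper) half-plane `{⟨·,u⟩ ≤ l}` for `l ∈ ℝ ∪ {±∞}`. -/
def ehs (u : E) (l : EReal) : Set E := {x : E | (((inner ℝ x u : ℝ) : ℝ) : EReal) ≤ l}

/-- The droplet with radii `l : E → EReal` (indexed by the quasi-stable directions). -/
def dropletOf (s : ℝ) (l : E → EReal) : Set E := ⋂ u ∈ quasiStable s, ehs u (l u)

/-- `D` is a droplet for the quasi-stable directions. -/
def IsDropletQ (s : ℝ) (D : Set E) : Prop := ∃ l : E → EReal, D = dropletOf s l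

/-- The tight radius of `D` in direction `u`. -/
def tight (D : Set E) (u : E) : EReal := sSup ((fun x : E => (((inner ℝ x u : ℝ) : ℝ) : EReal)) '' D)

/-- The `u`-side of a droplet `D`. -/
def uside (u : E) (D : Set E) : Set E := {x ∈ D | ∀ y ∈ D, (inner ℝ y u : ℝ) ≤ (inner ℝ x u : ℝ)}

/-- A non-degenerate droplet: each `u`-side has length at least `C^{1/3}` for unstable
`u ∈ 𝒬` and at least `C^{1/2}` for stable `u ∈ 𝒬`. -/
def IsNondeg (s C : ℝ) (𝒦 : Set E) (r : ℕ) (D : Set E) : Prop :=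
  IsDropletQ s D ∧ ∀ u ∈ quasiStable s,
    (u ∉ stableDirs 𝒦 r → C ^ ((1 : ℝ) / 3) ≤ Metric.diam (uside u D)) ∧
    (u ∈ stableDirs 𝒦 r → C ^ ((1 : ℝ) / 2) ≤ Metric.diam (uside u D))

/-- The droplet obtained from `D` by replacing its tight radius in direction `v` by `m`. -/
def extDroplet (s : ℝ) (v : E) (D : Set E) (m : EReal) : Set E :=
  (⋂ u ∈ quasiStable s \ {v}, ehs u (tight D u)) ∩ ehs v m

/-- `D'` is the `v`-extension of the droplet `D`. -/
def IsExtension (s : ℝ) (v : E) (D D' : Set E) : Prop :=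
  ∃ l' : EReal, tight D v < l' ∧ D' = extDroplet s v D l' ∧
    ((D' \ D) ∩ latt).Nonempty ∧
    ∀ m : EReal, tight D v < m → ((extDroplet s v D m \ D) ∩ latt).Nonempty → l' ≤ m

/-- Rotation of the plane by the angle `θ`. -/
def rotA (θ : ℝ) (u : E) : E :=
  pt (Real.cos θ * u 0 - Real.sin θ * u 1) (Real.sin θ * u 0 + Real.cos θ * u 1)

/-- The closed half-plane `H̄_u(l)`. -/
def hs (u : E) (l : ℝ) : Set E := {x : E | (inner ℝ x u : ℝ) ≤ l}

/-- The open half-plane `ℍ_u(l)`. -/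
def hso (u : E) (l : ℝ) : Set E := {x : E | (inner ℝ x u : ℝ) < l}

/-- Translate of a set. -/
def transl (x : E) (S : Set E) : Set E := (fun y => x + y) '' S

/-- The rectangle `x + (H̄_u ∩ H̄_{u+π/2} ∩ H̄_{u+π}(wid) ∩ H̄_{u-π/2}(len))`. -/
def rectHS (x u : E) (wid len : ℝ) : Set E :=
  transl x (hs u 0 ∩ hs (rotA (Real.pi / 2) u) 0 ∩ hs (rotA Real.pi u) wid ∩
    hs (rotA (-(Real.pi / 2)) u) len)

end

noncomputable section St15Helpers

open scoped RealInnerProductSpace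

@[simp] lemma pt_app0 (a b : ℝ) : pt a b 0 = a := rfl
@[simp] lemma pt_app1 (a b : ℝ) : pt a b 1 = b := rfl

lemma ext2 (x y : E) (h0 : x 0 = y 0) (h1 : x 1 = y 1) : x = y := by
  ext i; fin_cases i <;> assumption

lemma inner2 (x y : E) : (inner ℝ x y : ℝ) = x 0 * y 0 + x 1 * y 1 := by
  simp [PiLp.inner_apply, Fin.sum_univ_two, RCLike.inner_apply, mul_comm]

@[simp] lemma rot_app0 (x : E) : rot x 0 = -(x 1) := rfl
@[simp] lemma rot_app1 (x : E) : rot x 1 = x 0 := rfl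

lemma inner_rot_rot (x y : E) : (inner ℝ (rot x) (rot y) : ℝ) = inner ℝ x y := by
  simp only [inner2, rot_app0, rot_app1]; ring

lemma rot_rot (x : E) : rot (rot x) = -x := by
  apply ext2 <;> simp

lemma rot_neg (x : E) : rot (-x) = -rot x := by
  apply ext2 <;> simp

lemma rot4 (x : E) : rot (rot (rot (rot x))) = x := by
  rw [rot_rot (rot (rot x)), rot_rot, neg_neg]

lemma rot_injective : Function.Injective rot := by
  intro a b h
  have := congrArg (fun z => rot (rot (rot z))) h
  simpa only [rot4] using this

lemma norm_rot (x : E) : ‖rot x‖ = ‖x‖ := by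
  have h : (inner ℝ (rot x) (rot x) : ℝ) = inner ℝ x x := inner_rot_rot x x
  rw [real_inner_self_eq_norm_sq, real_inner_self_eq_norm_sq] at h
  have := congrArg Real.sqrt h
  rwa [Real.sqrt_sq (norm_nonneg _), Real.sqrt_sq (norm_nonneg _)] at this

lemma rotA_half (u : E) : rotA (Real.pi / 2) u = rot u := by
  apply ext2 <;> simp [rotA, rot]

lemma rotA_pi (u : E) : rotA Real.pi u = -u := by
  apply ext2 <;> simp [rotA]

lemma rotA_neg_half (u : E) : rotA (-(Real.pi / 2)) u = -rot u := by
  apply ext2 <;> simp [rotA, rot]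

lemma mem_transl {x y : E} {S : Set E} : y ∈ transl x S ↔ y - x ∈ S := by
  constructor
  · rintro ⟨z, hz, rfl⟩; simpa using hz
  · intro h; exact ⟨y - x, h, by show x + (y - x) = y; abel⟩

lemma count_rot_eq {𝒦 : Set E} (hrot : ∀ y ∈ 𝒦, rot y ∈ 𝒦) (w : E) :
    {y : E | y ∈ 𝒦 ∧ (inner ℝ y (rot w) : ℝ) < 0}.ncard
      = {y : E | y ∈ 𝒦 ∧ (inner ℝ y w : ℝ) < 0}.ncard := by
  have him : {y : E | y ∈ 𝒦 ∧ (inner ℝ y (rot w) : ℝ) < 0}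
      = rot '' {y : E | y ∈ 𝒦 ∧ (inner ℝ y w : ℝ) < 0} := by
    ext y
    simp only [Set.mem_image, Set.mem_setOf_eq]
    constructor
    · rintro ⟨hy, hlt⟩
      refine ⟨rot (rot (rot y)), ⟨hrot _ (hrot _ (hrot _ hy)), ?_⟩, rot4 y⟩
      rw [← inner_rot_rot (rot (rot (rot y))) w, rot4]; exact hlt
    · rintro ⟨a, ⟨ha, hlt⟩, rfl⟩
      exact ⟨hrot _ ha, by rwa [inner_rot_rot]⟩
  rw [him, Set.ncard_image_of_injective _ rot_injective]

lemma coord_abs_le_norm (x : E) (i : Fin 2) : |x i| ≤ ‖x‖ := by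
  have h : ‖x‖ = Real.sqrt (x 0 ^ 2 + x 1 ^ 2) := by
    rw [EuclideanSpace.norm_eq]
    simp [Fin.sum_univ_two, Real.norm_eq_abs, sq_abs]
  rw [h, ← Real.sqrt_sq_eq_abs]
  apply Real.sqrt_le_sqrt
  fin_cases i
  · show x 0 ^ 2 ≤ x 0 ^ 2 + x 1 ^ 2; nlinarith [sq_nonneg (x 1)]
  · show x 1 ^ 2 ≤ x 0 ^ 2 + x 1 ^ 2; nlinarith [sq_nonneg (x 0)]

lemma norm_le_of_mem_Ks {K : Set E} (hK : NiceK K) {s : ℝ} (hs : 0 ≤ s) {k : E}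
    (hk : k ∈ Ks K s) : ‖k‖ ≤ s := by
  obtain ⟨⟨k0, hk0, rfl⟩, -⟩ := hk
  rw [norm_smul, Real.norm_eq_abs, abs_of_nonneg hs]
  have h1 : ‖k0‖ ≤ 1 := hK.normMax.2 ⟨k0, hk0, rfl⟩
  calc s * ‖k0‖ ≤ s * 1 := by nlinarith [norm_nonneg k0]
    _ = s := mul_one s

lemma rot_mem_Ks {K : Set E} (hK : NiceK K) {s : ℝ} {k : E} (hk : k ∈ Ks K s) :
    rot k ∈ Ks K s := by
  obtain ⟨⟨k0, hk0, rfl⟩, hl⟩ := hk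
  refine ⟨⟨rot k0, hK.rotInv k0 hk0, ?_⟩, ?_⟩
  · apply ext2 <;> simp [PiLp.smul_apply, smul_eq_mul, mul_neg]
  · obtain ⟨a, b, hab⟩ := hl
    exact ⟨-b, a, by rw [hab]; apply ext2 <;> push_cast <;> simp⟩

lemma Ks_finite {K : Set E} (hK : NiceK K) {s : ℝ} (hs : 0 ≤ s) : (Ks K s).Finite := by
  have hsub : Ks K s ⊆ (fun p : ℤ × ℤ => pt p.1 p.2) ''
      (Set.Icc (-⌈s⌉, -⌈s⌉) (⌈s⌉, ⌈s⌉)) := by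
    rintro k hk
    have hn := norm_le_of_mem_Ks hK hs hk
    obtain ⟨a, b, rfl⟩ := hk.2
    have ha : |(a : ℝ)| ≤ s := by simpa using (coord_abs_le_norm (pt a b) 0).trans hn
    have hb : |(b : ℝ)| ≤ s := by simpa using (coord_abs_le_norm (pt a b) 1).trans hn
    have hceil : s ≤ (⌈s⌉ : ℝ) := Int.le_ceil s
    rw [abs_le] at ha hb
    have c1 : -⌈s⌉ ≤ a := by exact_mod_cast (by push_cast [Int.cast_neg]; linarith [ha.1] : ((-⌈s⌉ : ℤ) : ℝ) ≤ (a : ℝ))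
    have c2 : a ≤ ⌈s⌉ := by exact_mod_cast (by push_cast [Int.cast_neg]; linarith [ha.2] : ((a : ℤ) : ℝ) ≤ ((⌈s⌉ : ℤ) : ℝ))
    have c3 : -⌈s⌉ ≤ b := by exact_mod_cast (by push_cast [Int.cast_neg]; linarith [hb.1] : ((-⌈s⌉ : ℤ) : ℝ) ≤ (b : ℝ))
    have c4 : b ≤ ⌈s⌉ := by exact_mod_cast (by push_cast [Int.cast_neg]; linarith [hb.2] : ((b : ℤ) : ℝ) ≤ ((⌈s⌉ : ℤ) : ℝ))
    exact ⟨(a, b), Set.mem_Icc.mpr ⟨Prod.mk_le_mk.mpr ⟨c1, c3⟩, Prod.mk_le_mk.mpr ⟨c2, c4⟩⟩, rfl⟩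
  exact Set.Finite.subset (Set.Finite.image _ (Set.finite_Icc _ _)) hsub

end St15Helpers

theorem statement_15 (K : Set E) (hK : NiceK K) :
    ∃ s₀ : ℝ, ∀ s : ℝ, s₀ ≤ s →
      ∀ A : Set E, A ⊆ latt → ∀ u ∈ stableDirs (Ks K s) (rKs K s),
      ∀ x : E, ∀ l : ℝ, 0 ≤ l →
        bpCl (Ks K s) (rKs K s) A ∩
            transl x (hso u (-l) ∩ hs (rotA (Real.pi / 2) u) 0 ∩
              hs (rotA Real.pi u) (l + sSup ((fun k : E => (inner ℝ k u : ℝ)) '' Ks K s)) ∩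
              hs (rotA (-(Real.pi / 2)) u) (2 * s)) = ∅ →
        bpCl (Ks K s) (rKs K s) A ∩
            transl x (hs u (sSup ((fun k : E => (inner ℝ k u : ℝ)) '' Ks K s)) ∩
              hs (rotA (Real.pi / 2) u) 0 ∩ hso (rotA Real.pi u) 0 ∩
              hs (rotA (-(Real.pi / 2)) u) (2 * s)) = ∅ →
        A ∩ rectHS x u l (2 * s) = ∅ →
        bpCl (Ks K s) (rKs K s) A ∩ rectHS x u l (2 * s) = ∅ := by
  refine ⟨1, fun s hs1 A hA u hu x l hl hMinus hPlus hAR => ?_⟩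
  have hs0 : (0:ℝ) ≤ s := le_trans zero_le_one hs1
  obtain ⟨hu1, hucount⟩ := hu
  have hKfin : (Ks K s).Finite := Ks_finite hK hs0
  have hKrot : ∀ k ∈ Ks K s, rot k ∈ Ks K s := fun k hk => rot_mem_Ks hK hk
  have hKneg : ∀ k ∈ Ks K s, -k ∈ Ks K s := fun k hk => rot_rot k ▸ hKrot _ (hKrot _ hk)
  set su := sSup ((fun k : E => (inner ℝ k u : ℝ)) '' Ks K s) with hsu_def
  have hbdd : BddAbove ((fun k : E => (inner ℝ k u : ℝ)) '' Ks K s) := (hKfin.image _).bddAbove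
  have hsu_le : ∀ k ∈ Ks K s, (inner ℝ k u : ℝ) ≤ su := fun k hk => le_csSup hbdd ⟨k, hk, rfl⟩
  have hsu_ge : ∀ k ∈ Ks K s, -su ≤ (inner ℝ k u : ℝ) := by
    intro k hk
    have h := hsu_le (-k) (hKneg k hk)
    rw [inner_neg_left] at h; linarith
  have hnru : ‖rot u‖ = 1 := by rw [norm_rot]; exact hu1
  have hinner_abs : ∀ k ∈ Ks K s, |(inner ℝ k (rot u) : ℝ)| ≤ s := by
    intro k hk
    calc |(inner ℝ k (rot u) : ℝ)| ≤ ‖k‖ * ‖rot u‖ := abs_real_inner_le_norm k (rot u)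
      _ = ‖k‖ := by rw [hnru, mul_one]
      _ ≤ s := norm_le_of_mem_Ks hK hs0 hk
  have hcount1 : {k : E | k ∈ Ks K s ∧ (inner ℝ k (rot u) : ℝ) < 0}.ncard < rKs K s := by
    rw [count_rot_eq hKrot]; exact hucount
  have hcount2 : {k : E | k ∈ Ks K s ∧ (inner ℝ k (-(rot u)) : ℝ) < 0}.ncard < rKs K s := by
    have h1 : -(rot u) = rot (rot (rot u)) := (rot_rot (rot u)).symm
    rw [h1, count_rot_eq hKrot, count_rot_eq hKrot, count_rot_eq hKrot]; exact hucount
  suffices hstep : ∀ t : ℕ,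
      (step (Ks K s) (rKs K s))^[t] (A ∩ latt) ∩ rectHS x u l (2 * s) = ∅ by
    rw [Set.eq_empty_iff_forall_notMem]
    rintro y ⟨hy1, hy2⟩
    simp only [bpCl, Set.mem_iUnion] at hy1
    obtain ⟨t, ht⟩ := hy1
    exact Set.eq_empty_iff_forall_notMem.mp (hstep t) y ⟨ht, hy2⟩
  intro t
  induction t with
  | zero =>
    simp only [Function.iterate_zero, id_eq]
    rw [Set.eq_empty_iff_forall_notMem]
    rintro y ⟨⟨hyA, -⟩, hyR⟩
    exact Set.eq_empty_iff_forall_notMem.mp hAR y ⟨hyA, hyR⟩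
  | succ t ih =>
    rw [Function.iterate_succ_apply', Set.eq_empty_iff_forall_notMem]
    rintro y ⟨hy, hyR⟩
    rcases hy with hy | ⟨hylatt, hycard⟩
    · exact Set.eq_empty_iff_forall_notMem.mp ih y ⟨hy, hyR⟩
    rw [rectHS] at hyR
    obtain ⟨z, hz, rfl⟩ := hyR
    obtain ⟨⟨⟨hz1, hz2⟩, hz3⟩, hz4⟩ := hz
    rw [rotA_half] at hz2
    rw [rotA_pi] at hz3
    rw [rotA_neg_half] at hz4
    have hz1' : (inner ℝ z u : ℝ) ≤ 0 := hz1
    have hz2' : (inner ℝ z (rot u) : ℝ) ≤ 0 := hz2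
    have hz3' : (inner ℝ z (-u) : ℝ) ≤ l := hz3
    have hz4' : (inner ℝ z (-(rot u)) : ℝ) ≤ 2 * s := hz4
    rw [inner_neg_right] at hz3' hz4'
    set At := (step (Ks K s) (rKs K s))^[t] (A ∩ latt) with hAt_def
    have hAtcl : At ⊆ bpCl (Ks K s) (rKs K s) A := fun w hw => Set.mem_iUnion.mpr ⟨t, hw⟩
    set T := ((fun k => x + z + k) '' Ks K s) ∩ At with hT_def
    have key : ∀ w ∈ T, ∃ k, k ∈ Ks K s ∧ w = x + z + k ∧
        (0 < (inner ℝ z (rot u) : ℝ) + inner ℝ k (rot u) ∨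
          (inner ℝ z (rot u) : ℝ) + inner ℝ k (rot u) < -(2 * s)) := by
      rintro w ⟨⟨k, hk, rfl⟩, hwAt⟩
      refine ⟨k, hk, rfl, ?_⟩
      by_contra hcon
      push_neg at hcon
      obtain ⟨hσ1, hσ2⟩ := hcon
      have hb1 : (inner ℝ k u : ℝ) ≤ su := hsu_le k hk
      have hb2 : -su ≤ (inner ℝ k u : ℝ) := hsu_ge k hk
      rcases lt_or_ge ((inner ℝ z u : ℝ) + inner ℝ k u) (-l) with hm | hm
      · refine Set.eq_empty_iff_forall_notMem.mp hMinus (x + z + k)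
          ⟨hAtcl hwAt, mem_transl.mpr ?_⟩
        rw [show (x + z + k) - x = z + k from by abel, rotA_half, rotA_pi, rotA_neg_half]
        refine ⟨⟨⟨?_, ?_⟩, ?_⟩, ?_⟩
        · show (inner ℝ (z + k) u : ℝ) < -l
          rw [inner_add_left]; exact hm
        · show (inner ℝ (z + k) (rot u) : ℝ) ≤ 0
          rw [inner_add_left]; linarith
        · show (inner ℝ (z + k) (-u) : ℝ) ≤ l + su
          rw [inner_neg_right, inner_add_left]; linarith
        · show (inner ℝ (z + k) (-(rot u)) : ℝ) ≤ 2 * s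
          rw [inner_neg_right, inner_add_left]; linarith
      rcases le_or_gt ((inner ℝ z u : ℝ) + inner ℝ k u) 0 with hm2 | hm2
      · refine Set.eq_empty_iff_forall_notMem.mp ih (x + z + k) ⟨hwAt, ?_⟩
        rw [rectHS]
        refine mem_transl.mpr ?_
        rw [show (x + z + k) - x = z + k from by abel, rotA_half, rotA_pi, rotA_neg_half]
        refine ⟨⟨⟨?_, ?_⟩, ?_⟩, ?_⟩
        · show (inner ℝ (z + k) u : ℝ) ≤ 0
          rw [inner_add_left]; exact hm2
        · show (inner ℝ (z + k) (rot u) : ℝ) ≤ 0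
          rw [inner_add_left]; linarith
        · show (inner ℝ (z + k) (-u) : ℝ) ≤ l
          rw [inner_neg_right, inner_add_left]; linarith
        · show (inner ℝ (z + k) (-(rot u)) : ℝ) ≤ 2 * s
          rw [inner_neg_right, inner_add_left]; linarith
      · refine Set.eq_empty_iff_forall_notMem.mp hPlus (x + z + k)
          ⟨hAtcl hwAt, mem_transl.mpr ?_⟩
        rw [show (x + z + k) - x = z + k from by abel, rotA_half, rotA_pi, rotA_neg_half]
        refine ⟨⟨⟨?_, ?_⟩, ?_⟩, ?_⟩
        · show (inner ℝ (z + k) u : ℝ) ≤ su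
          rw [inner_add_left]; linarith
        · show (inner ℝ (z + k) (rot u) : ℝ) ≤ 0
          rw [inner_add_left]; linarith
        · show (inner ℝ (z + k) (-u) : ℝ) < 0
          rw [inner_neg_right, inner_add_left]; linarith
        · show (inner ℝ (z + k) (-(rot u)) : ℝ) ≤ 2 * s
          rw [inner_neg_right, inner_add_left]; linarith
    have hside : (∀ w ∈ T, ∃ k, k ∈ Ks K s ∧ w = x + z + k ∧ 0 < (inner ℝ k (rot u) : ℝ)) ∨
        (∀ w ∈ T, ∃ k, k ∈ Ks K s ∧ w = x + z + k ∧ (inner ℝ k (rot u) : ℝ) < 0) := by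
      by_cases hbot : ∃ k₀, k₀ ∈ Ks K s ∧
          (inner ℝ z (rot u) : ℝ) + inner ℝ k₀ (rot u) < -(2 * s) ∧ x + z + k₀ ∈ T
      · right
        obtain ⟨k₀, hk₀, hσ₀, -⟩ := hbot
        intro w hw
        obtain ⟨k, hk, rfl, hcase⟩ := key w hw
        rcases hcase with htop | hbot'
        · exfalso
          have h1 := hinner_abs k hk
          have h2 := hinner_abs k₀ hk₀
          rw [abs_le] at h1 h2
          linarith [h1.1, h1.2, h2.1, h2.2]
        · exact ⟨k, hk, rfl, by linarith⟩
      · left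
        intro w hw
        obtain ⟨k, hk, rfl, hcase⟩ := key w hw
        rcases hcase with htop | hbot'
        · exact ⟨k, hk, rfl, by linarith⟩
        · exact absurd ⟨k, hk, hbot', ⟨⟨k, hk, rfl⟩, ((Set.mem_inter_iff _ _ _).mp hw).2⟩⟩ hbot
    have hinj : Function.Injective (fun k : E => x + z + k) := fun a b h => by
      simpa using add_left_cancel h
    rcases hside with hall | hall
    · have hsub : T ⊆ (fun k => x + z + k) ''
          {k : E | k ∈ Ks K s ∧ (inner ℝ k (-(rot u)) : ℝ) < 0} := by
        intro w hw
        obtain ⟨k, hk, rfl, hd⟩ := hall w hw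
        exact ⟨k, ⟨hk, by rw [inner_neg_right]; linarith⟩, rfl⟩
      have hfin' : ({k : E | k ∈ Ks K s ∧ (inner ℝ k (-(rot u)) : ℝ) < 0}).Finite :=
        hKfin.subset fun k hk => hk.1
      have h1 := Set.ncard_le_ncard hsub (hfin'.image _)
      rw [Set.ncard_image_of_injective _ hinj] at h1
      omega
    · have hsub : T ⊆ (fun k => x + z + k) ''
          {k : E | k ∈ Ks K s ∧ (inner ℝ k (rot u) : ℝ) < 0} := by
        intro w hw
        obtain ⟨k, hk, rfl, hd⟩ := hall w hw
        exact ⟨k, ⟨hk, hd⟩, rfl⟩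
      have hfin' : ({k : E | k ∈ Ks K s ∧ (inner ℝ k (rot u) : ℝ) < 0}).Finite :=
        hKfin.subset fun k hk => hk.1
      have h1 := Set.ncard_le_ncard hsub (hfin'.image _)
      rw [Set.ncard_image_of_injective _ hinj] at h1
      omega
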